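/- Let (𝔪, ε) be a nonempty signed symmetric multisegment in the good-parity setting, with initial sequence Δ₁ ⪰ … ⪰ Δ_l, and with 𝔪# nonempty. Assume e(Δ₁) = e(Δ'₁). Suppose there exists j ≥ 1 such that j < l, j < l', Δ'_{j+1} ≺ Δ_j, c(Δ_j) ≠ 0 and c(Δ_{j+1}) = 0. Then Δ'_{j+1} ⪯ Δ_{j+1}. -/

import Mathlib

namespace AZ

/-- A segment in doubled coordinates: the pair `(a, b)` represents the segment
`[a/2, b/2]` whose endpoints lie in `(1/2)ℤ`.  Thus the end `e(Δ)` is `Δ.2 / 2`,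
the beginning `b(Δ)` is `Δ.1 / 2`, `Δ` is centered iff `Δ.1 + Δ.2 = 0`, and
`c(Δ) = 1/2` iff `Δ.1 + Δ.2 = 2`. -/
abbrev Seg := ℤ × ℤ

namespace Seg

/-- Well-formedness of a segment: `a ≤ b` and `a ≡ b [ZMOD 2]`, i.e. `b - a ∈ 2ℕ`. -/
def WF (Δ : Seg) : Prop := Δ.1 ≤ Δ.2 ∧ Δ.1 % 2 = Δ.2 % 2

/-- The dual (contragredient) segment `Δ∨ = [−b, −a]`. -/
def dual (Δ : Seg) : Seg := (-Δ.2, -Δ.1)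

/-- `Δ⁻` : the segment with its end removed. -/
def trimEnd (Δ : Seg) : Seg := (Δ.1, Δ.2 - 2)

/-- `⁻Δ` : the segment with its beginning removed. -/
def trimBeg (Δ : Seg) : Seg := (Δ.1 + 2, Δ.2)

/-- `⁺Δ` : the segment with its beginning extended. -/
def extBeg (Δ : Seg) : Seg := (Δ.1 - 2, Δ.2)

/-- The order on segments: `[x₁,y₁] ≤ [x₂,y₂]` iff `x₁ < x₂`, or `x₁ = x₂` and `y₁ ≥ y₂`. -/
def le (Δ₁ Δ₂ : Seg) : Prop := Δ₁.1 < Δ₂.1 ∨ (Δ₁.1 = Δ₂.1 ∧ Δ₂.2 ≤ Δ₁.2)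

end Seg

/-- Labels `≤0`, `=0`, `≥0` for labeled segments. -/
inductive Label
  | le0 | eq0 | ge0
deriving DecidableEq

/-- Numerical index of a label, used to order the labels `≤0 < =0 < ≥0`. -/
def Label.idx : Label → ℕ
  | .le0 => 0
  | .eq0 => 1
  | .ge0 => 2

/-- A labeled segment: a segment together with a label. -/
abbrev LSeg := Seg × Label

namespace LSeg

/-- The order `⪯` on labeled segments: segments labeled `≤0` precede those labeled `=0`,
which precede those labeled `≥0`; for equal labels `≥0` or `≤0` one compares the segments,
and for label `=0` one compares the ends. -/
def le (Λ₁ Λ₂ : LSeg) : Prop :=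
  Λ₁.2.idx < Λ₂.2.idx ∨
    (Λ₁.2 = Λ₂.2 ∧
      if Λ₁.2 = Label.eq0 then Λ₁.1.2 ≤ Λ₂.1.2 else Seg.le Λ₁.1 Λ₂.1)

/-- The strict order `≺` on labeled segments. -/
def lt (Λ₁ Λ₂ : LSeg) : Prop := LSeg.le Λ₁ Λ₂ ∧ Λ₁ ≠ Λ₂

/-- The contragredient of a labeled segment: for a centered segment the label `≤0`
becomes `≥0` and the labels `=0`, `≥0` are kept; for a non-centered segment the
label is flipped. -/
def dual (Λ : LSeg) : LSeg :=
  (Seg.dual Λ.1,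
    if Λ.1.1 + Λ.1.2 = 0 then (if Λ.2 = Label.le0 then Label.ge0 else Λ.2)
    else
      match Λ.2 with
      | Label.le0 => Label.ge0
      | Label.eq0 => Label.eq0
      | Label.ge0 => Label.le0)

end LSeg

/-- The forced label of a non-centered segment. -/
def forcedLabel (Δ : Seg) : Label := if 0 < Δ.1 + Δ.2 then Label.ge0 else Label.le0

/-- The labeling `s(𝔪)` of a multisegment: each non-centered segment gets its forced
label; a centered segment of multiplicity `m` contributes `⌊m/2⌋` copies labeled `≤0`,
`⌊m/2⌋` copies labeled `≥0`, and `m − 2⌊m/2⌋` copies labeled `=0`. -/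
def smap (m : Multiset Seg) : Multiset LSeg :=
  (m.filter fun Δ => ¬ Δ.1 + Δ.2 = 0).map (fun Δ => (Δ, forcedLabel Δ)) +
    (m.toFinset.filter fun Δ => Δ.1 + Δ.2 = 0).val.bind (fun Δ =>
      Multiset.replicate (m.count Δ / 2) (Δ, Label.le0) +
        Multiset.replicate (m.count Δ / 2) (Δ, Label.ge0) +
        Multiset.replicate (m.count Δ % 2) (Δ, Label.eq0))

/-- A labeled segment is special (the initial sequence stops there): `[0,0]` labeled
`≥0` or `=0` in the integer case; `[1/2,1/2]`, or `[−1/2,1/2]` labeled `≥0` or `=0`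
with `ε([−1/2,1/2]) = −1`, in the half-integer case. -/
def Special (ε : Seg → ℤ) (Λ : LSeg) : Prop :=
  (Λ.1 = ((0 : ℤ), (0 : ℤ)) ∧ (Λ.2 = Label.ge0 ∨ Λ.2 = Label.eq0)) ∨
    Λ.1 = ((1 : ℤ), (1 : ℤ)) ∨
      (Λ.1 = ((-1 : ℤ), (1 : ℤ)) ∧ (Λ.2 = Label.ge0 ∨ Λ.2 = Label.eq0) ∧ ε (-1, 1) = -1)

instance (ε : Seg → ℤ) (Λ : LSeg) : Decidable (Special ε Λ) := by
  unfold Special; infer_instance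

/-- The condition for `next` to be a successor of `cur` in the initial sequence:
`next ≺ cur`, `e(next) = e(cur) − 1`, and opposite signs when both are centered. -/
def Succ (ε : Seg → ℤ) (cur next : LSeg) : Prop :=
  LSeg.lt next cur ∧ next.1.2 = cur.1.2 - 2 ∧
    (cur.1.1 + cur.1.2 = 0 → next.1.1 + next.1.2 = 0 → ε next.1 = - ε cur.1)

/-- `Δ 1, …, Δ l` is the initial sequence in the algorithm for `(m, ε)`:
`Δ 1` is the `⪯`-largest element of `s(m)` with maximal end; recursively,
`Δ (j+1)` is the `⪯`-largest successor of `Δ j`; the sequence stops when the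
current segment is special or no successor exists. -/
structure IsInitSeq (m : Multiset Seg) (ε : Seg → ℤ) (Δ : ℕ → LSeg) (l : ℕ) : Prop where
  one_le : 1 ≤ l
  mem : ∀ j, 1 ≤ j → j ≤ l → Δ j ∈ smap m
  first_max_end : ∀ Λ ∈ smap m, Λ.1.2 ≤ (Δ 1).1.2
  first_max : ∀ Λ ∈ smap m, Λ.1.2 = (Δ 1).1.2 → LSeg.le Λ (Δ 1)
  not_special : ∀ j, 1 ≤ j → j < l → ¬ Special ε (Δ j)
  succ : ∀ j, 1 ≤ j → j < l → Succ ε (Δ j) (Δ (j + 1))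
  succ_max : ∀ j, 1 ≤ j → j < l → ∀ Λ ∈ smap m, Succ ε (Δ j) Λ → LSeg.le Λ (Δ (j + 1))
  last : Special ε (Δ l) ∨ ∀ Λ ∈ smap m, ¬ Succ ε (Δ l) Λ

/-- The sign `ε₀`: `−1` if the sequence stopped at a special segment, `1` otherwise. -/
def eps0 (ε : Seg → ℤ) (Δ : ℕ → LSeg) (l : ℕ) : ℤ :=
  if Special ε (Δ l) then -1 else 1

/-- The number `n₀` of centered segments of `m`. -/
def nCentered (m : Multiset Seg) : ℕ := (m.filter fun Δ => Δ.1 + Δ.2 = 0).card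

/-- The sign `ε₁` of the centered segment `𝔪₁` in the case `ε₀ = −1`:
`(−1)^(n₀+1)·ε([0,0])` in the integer case, `(−1)^(n₀)` in the half-integer case. -/
def epsOne (m : Multiset Seg) (ε : Seg → ℤ) (Δ : ℕ → LSeg) : ℤ :=
  if (Δ 1).1.2 % 2 = 0 then (-1) ^ (nCentered m + 1) * ε (0, 0)
  else (-1) ^ nCentered m

/-- The signed multisegment `𝔪₁`: if `ε₀ = −1` it is the centered segment
`[−e(Δ₁), e(Δ₁)]` with sign `ε₁`; otherwise it is
`[e(Δ_l), e(Δ₁)] + [−e(Δ₁), −e(Δ_l)]` (non-centered segments carry sign `1`). -/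
def mOne (m : Multiset Seg) (ε : Seg → ℤ) (Δ : ℕ → LSeg) (l : ℕ) : Multiset (Seg × ℤ) :=
  if Special ε (Δ l) then {((-(Δ 1).1.2, (Δ 1).1.2), epsOne m ε Δ)}
  else {(((Δ l).1.2, (Δ 1).1.2), 1), ((-(Δ 1).1.2, -(Δ l).1.2), 1)}

/-- The labeled copies `Δ 1, …, Δ l` whose end gets removed. -/
def DEnd (Δ : ℕ → LSeg) (l : ℕ) : Multiset LSeg := (Finset.Icc 1 l).val.map Δ

/-- The labeled copies (the contragredients of the `Δ j`) whose beginning gets removed. -/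
def DBeg (Δ : ℕ → LSeg) (l : ℕ) : Multiset LSeg := (DEnd Δ l).map LSeg.dual

/-- The labeled copies trimmed on both sides. -/
def DBoth (Δ : ℕ → LSeg) (l : ℕ) : Multiset LSeg := DEnd Δ l ∩ DBeg Δ l

/-- The multisegment `𝔪#`: remove the ends of the `Δ j` and the beginnings of their
contragredients (one labeled copy each, both trims if the copy occurs in both lists),
keep all other copies, and discard empty segments. -/
def mHash (m : Multiset Seg) (Δ : ℕ → LSeg) (l : ℕ) : Multiset Seg :=
  (smap m - DEnd Δ l - (DBeg Δ l - DBoth Δ l)).map Prod.fst +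
    ((DBoth Δ l).map (fun Λ => ((Λ.1.1 + 2, Λ.1.2 - 2) : Seg)) +
        (DEnd Δ l - DBoth Δ l).map (fun Λ => ((Λ.1.1, Λ.1.2 - 2) : Seg)) +
        (DBeg Δ l - DBoth Δ l).map (fun Λ => ((Λ.1.1 + 2, Λ.1.2) : Seg))).filter
      fun Δ0 => Δ0.1 ≤ Δ0.2

/-- The trimmed segment `Λ_{i_j}#` obtained from `Δ j`. -/
def trimAt (Δ : ℕ → LSeg) (l : ℕ) (j : ℕ) : Seg :=
  if Δ j ∈ DBeg Δ l then ((Δ j).1.1 + 2, (Δ j).1.2 - 2)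
  else ((Δ j).1.1, (Δ j).1.2 - 2)

/-- The sign function `ε#` on (centered) segments of `𝔪#`. -/
def epsHash (m : Multiset Seg) (ε : Seg → ℤ) (Δ : ℕ → LSeg) (l : ℕ) : Seg → ℤ :=
  fun Δ0 =>
    if ∃ j ∈ Finset.Icc 1 l, ((Δ j).1.1 + (Δ j).1.2 = 0 ∧ trimAt Δ l j = Δ0) then
      eps0 ε Δ l * ε (Δ0.1 - 2, Δ0.2 + 2)
    else if ∃ j ∈ Finset.Icc 1 l,
        ((Δ j).1.1 + (Δ j).1.2 = 2 ∧ trimAt Δ l j = Δ0 ∧ Δ0 ∉ m) then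
      eps0 ε Δ l
    else if ∃ j ∈ Finset.Icc 1 l,
        ((Δ j).1.1 + (Δ j).1.2 = 2 ∧ trimAt Δ l j = Δ0 ∧ Δ0 ∈ m) then
      -(eps0 ε Δ l) * ε Δ0
    else eps0 ε Δ l * ε Δ0

/-- The good-parity duality algorithm `AD`, as a relation between the input `(m, ε)`
and the output signed multisegment: `AD(0) = 0` and
`AD(𝔪, ε) = (𝔪₁, ε₁) + AD(𝔪#, ε#)`. -/
inductive IsAD : Multiset Seg → (Seg → ℤ) → Multiset (Seg × ℤ) → Prop
  | zero (ε : Seg → ℤ) : IsAD 0 ε 0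
  | step {m : Multiset Seg} {ε : Seg → ℤ} {Δ : ℕ → LSeg} {l : ℕ} {d : Multiset (Seg × ℤ)}
      (hm : m ≠ 0) (hseq : IsInitSeq m ε Δ l)
      (hrec : IsAD (mHash m Δ l) (epsHash m ε Δ l) d) :
      IsAD m ε (mOne m ε Δ l + d)

/-- A valid signed symmetric multisegment in the good-parity setting. -/
structure GoodInput (m : Multiset Seg) (ε : Seg → ℤ) : Prop where
  wf : ∀ Δ0 ∈ m, Seg.WF Δ0
  symm : m.map Seg.dual = m
  parity : ∀ Δ₁ ∈ m, ∀ Δ₂ ∈ m, Δ₁.2 % 2 = Δ₂.2 % 2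
  sign : ∀ Δ0, ε Δ0 = 1 ∨ ε Δ0 = -1

section Aux

open Multiset

lemma ends_formula {m : Multiset Seg} {ε : Seg → ℤ} {Δ : ℕ → LSeg} {l : ℕ}
    (h : IsInitSeq m ε Δ l) :
    ∀ k, 1 ≤ k → k ≤ l → ((Δ k).1.2 : ℤ) = (Δ 1).1.2 - 2 * ((k : ℤ) - 1) := by
  intro k
  induction k with
  | zero => intro h1 _; exact absurd h1 (by norm_num)
  | succ n ih =>
    intro _ hk
    rcases Nat.eq_zero_or_pos n with hn | hn
    · subst hn; push_cast; ring
    · have hs := (h.succ n hn (by omega)).2.1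
      have h2 := ih hn (by omega)
      rw [hs, h2]; push_cast; ring

lemma smap_spec {m : Multiset Seg} {Λ : LSeg} (h : Λ ∈ smap m) :
    Λ.1 ∈ m ∧
    (Λ.1.1 + Λ.1.2 ≠ 0 → Λ.2 = forcedLabel Λ.1) ∧
    (Λ.2 = Label.le0 → Λ.1.1 + Λ.1.2 ≤ 0) ∧
    (Λ.2 = Label.ge0 → 0 ≤ Λ.1.1 + Λ.1.2) ∧
    (Λ.2 = Label.eq0 → Λ.1.1 + Λ.1.2 = 0) := by
  unfold smap at h
  rcases mem_add.1 h with h | h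
  · obtain ⟨Δ0, hΔ0, rfl⟩ := mem_map.1 h
    obtain ⟨hm, hnc⟩ := mem_filter.1 hΔ0
    refine ⟨hm, fun _ => rfl, ?_, ?_, ?_⟩ <;>
    · intro hlab
      unfold forcedLabel at hlab
      split at hlab <;> simp_all <;> omega
  · obtain ⟨Δ0, hΔ0, hmem⟩ := mem_bind.1 h
    have hc : Δ0.1 + Δ0.2 = 0 := (Finset.mem_filter.1 (Finset.mem_def.2 hΔ0)).2
    have hm : Δ0 ∈ m :=
      Multiset.mem_toFinset.1 (Finset.mem_filter.1 (Finset.mem_def.2 hΔ0)).1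
    have hΛ : Λ.1 = Δ0 := by
      rcases mem_add.1 hmem with h1 | h1
      · rcases mem_add.1 h1 with h2 | h2 <;>
          simpa using congrArg Prod.fst (eq_of_mem_replicate h2)
      · simpa using congrArg Prod.fst (eq_of_mem_replicate h1)
    rw [hΛ]
    exact ⟨hm, fun hnc => absurd hc hnc, fun _ => le_of_eq hc, fun _ => ge_of_eq hc,
      fun _ => hc⟩

lemma mem_smap_noncentered {m : Multiset Seg} {σ : Seg} (hm : σ ∈ m)
    (hnc : σ.1 + σ.2 ≠ 0) : (σ, forcedLabel σ) ∈ smap m := by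
  unfold smap
  exact mem_add.2 (Or.inl (mem_map_of_mem _ (mem_filter.2 ⟨hm, hnc⟩)))

lemma smap_count_centered (m : Multiset Seg) {σ : Seg} (hc : σ.1 + σ.2 = 0) :
    (smap m).count (σ, Label.le0) = m.count σ / 2 ∧
    (smap m).count (σ, Label.ge0) = m.count σ / 2 ∧
    (smap m).count (σ, Label.eq0) = m.count σ % 2 := by
  have hmap : ∀ L : Label,
      ((m.filter fun Δ => ¬ Δ.1 + Δ.2 = 0).map
        (fun Δ => (Δ, forcedLabel Δ))).count (σ, L) = 0 := by
    intro L
    rw [count_eq_zero]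
    intro hmem
    obtain ⟨Δ0, hΔ0, heq⟩ := mem_map.1 hmem
    have : Δ0 = σ := congrArg Prod.fst heq
    subst this
    exact (mem_filter.1 hΔ0).2 hc
  have hbind : ∀ L : Label, ∀ nle nge neq : ℕ → ℕ,
      ((m.toFinset.filter fun Δ => Δ.1 + Δ.2 = 0).val.bind (fun Δ =>
        Multiset.replicate (m.count Δ / 2) (Δ, Label.le0) +
          Multiset.replicate (m.count Δ / 2) (Δ, Label.ge0) +
          Multiset.replicate (m.count Δ % 2) (Δ, Label.eq0))).count (σ, L) =
      if σ ∈ m then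
        (Multiset.replicate (m.count σ / 2) (σ, Label.le0) +
          Multiset.replicate (m.count σ / 2) (σ, Label.ge0) +
          Multiset.replicate (m.count σ % 2) (σ, Label.eq0)).count (σ, L)
      else 0 := by
    intro L _ _ _
    rw [count_bind]
    by_cases hσ : σ ∈ m
    · have hσ' : σ ∈ m.toFinset.filter fun Δ => Δ.1 + Δ.2 = 0 :=
        Finset.mem_filter.2 ⟨Multiset.mem_toFinset.2 hσ, hc⟩
      rw [if_pos hσ]
      have : ((m.toFinset.filter fun Δ => Δ.1 + Δ.2 = 0).val.map fun Δ0 =>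
          (Multiset.replicate (m.count Δ0 / 2) (Δ0, Label.le0) +
            Multiset.replicate (m.count Δ0 / 2) (Δ0, Label.ge0) +
            Multiset.replicate (m.count Δ0 % 2) (Δ0, Label.eq0)).count (σ, L)).sum =
          ∑ Δ0 ∈ m.toFinset.filter (fun Δ => Δ.1 + Δ.2 = 0),
            (Multiset.replicate (m.count Δ0 / 2) (Δ0, Label.le0) +
              Multiset.replicate (m.count Δ0 / 2) (Δ0, Label.ge0) +
              Multiset.replicate (m.count Δ0 % 2) (Δ0, Label.eq0)).count (σ, L) := rfl
      rw [this]
      refine Finset.sum_eq_single_of_mem σ hσ' ?_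
      intro b _ hb
      rw [count_eq_zero]
      intro hmem
      have : (σ, L).1 = b := by
        rcases mem_add.1 hmem with h1 | h1
        · rcases mem_add.1 h1 with h2 | h2 <;>
            simpa using congrArg Prod.fst (eq_of_mem_replicate h2)
        · simpa using congrArg Prod.fst (eq_of_mem_replicate h1)
      exact hb this.symm
    · rw [if_neg hσ]
      apply Multiset.sum_eq_zero
      intro x hx
      obtain ⟨Δ0, hΔ0, rfl⟩ := mem_map.1 hx
      have hΔ0m : Δ0 ∈ m :=
        Multiset.mem_toFinset.1 (Finset.mem_filter.1 (Finset.mem_def.2 hΔ0)).1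
      rw [count_eq_zero]
      intro hmem
      have : σ = Δ0 := by
        rcases mem_add.1 hmem with h1 | h1
        · rcases mem_add.1 h1 with h2 | h2 <;>
            simpa using congrArg Prod.fst (eq_of_mem_replicate h2)
        · simpa using congrArg Prod.fst (eq_of_mem_replicate h1)
      exact hσ (this ▸ hΔ0m)
  unfold smap
  by_cases hσ : σ ∈ m
  · refine ⟨?_, ?_, ?_⟩ <;>
      rw [count_add, hmap, hbind _ id id id, if_pos hσ, count_add, count_add,
        count_replicate, count_replicate, count_replicate] <;> simp
  · have h0 : m.count σ = 0 := count_eq_zero.2 hσ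
    refine ⟨?_, ?_, ?_⟩ <;>
      rw [count_add, hmap, hbind _ id id id, if_neg hσ, h0]

lemma countP_fst (s : Multiset LSeg) (σ : Seg) :
    s.countP (fun Λ => Λ.1 = σ) =
      s.count (σ, Label.le0) + s.count (σ, Label.eq0) + s.count (σ, Label.ge0) := by
  induction s using Multiset.induction_on with
  | empty => simp
  | cons a s ih =>
    obtain ⟨τ, L⟩ := a
    rw [countP_cons, count_cons, count_cons, count_cons, ih]
    by_cases hτ : τ = σ
    · subst hτ; cases L <;> simp <;> omega
    · have h0 : ¬ σ = τ := fun h => hτ h.symm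
      simp [hτ, h0]

lemma count_map_seg (s : Multiset LSeg) (f : LSeg → Seg) (σ τ : Seg)
    (hf : ∀ Λ : LSeg, f Λ = τ ↔ Λ.1 = σ) :
    (s.map f).count τ =
      s.count (σ, Label.le0) + s.count (σ, Label.eq0) + s.count (σ, Label.ge0) := by
  rw [count_map, ← countP_eq_card_filter, ← countP_fst s σ]
  exact countP_congr rfl (fun Λ _ => by
    simp only [eq_iff_iff]
    rw [eq_comm, hf Λ])

lemma count_map_fst (s : Multiset LSeg) (σ : Seg) :
    (s.map Prod.fst).count σ =
      s.count (σ, Label.le0) + s.count (σ, Label.eq0) + s.count (σ, Label.ge0) :=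
  count_map_seg s Prod.fst σ σ (fun _ => Iff.rfl)

lemma count_mapIcc_eq_zero {f : ℕ → LSeg} {l : ℕ} {Λ : LSeg}
    (h : ∀ i, 1 ≤ i → i ≤ l → f i ≠ Λ) : ((Finset.Icc 1 l).val.map f).count Λ = 0 := by
  rw [count_eq_zero]
  intro hmem
  obtain ⟨i, hi, hΔ⟩ := mem_map.1 hmem
  obtain ⟨h1, h2⟩ := Finset.mem_Icc.1 (Finset.mem_def.2 hi)
  exact h i h1 h2 hΔ

lemma count_mapIcc_eq_one {f : ℕ → LSeg} {l : ℕ} {Λ : LSeg} {i₀ : ℕ}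
    (h1 : 1 ≤ i₀) (h2 : i₀ ≤ l) (hΛ : f i₀ = Λ)
    (huniq : ∀ i, 1 ≤ i → i ≤ l → f i = Λ → i = i₀) :
    ((Finset.Icc 1 l).val.map f).count Λ = 1 := by
  rw [count_map, ← countP_eq_card_filter]
  have h : (Finset.Icc 1 l).val.countP (fun i => Λ = f i) =
      (Finset.Icc 1 l).val.countP (i₀ = ·) := by
    refine countP_congr rfl (fun i hi => ?_)
    obtain ⟨hi1, hi2⟩ := Finset.mem_Icc.1 (Finset.mem_def.2 hi)
    simp only [eq_iff_iff]
    exact ⟨fun he => (huniq i hi1 hi2 he.symm).symm, fun he => he ▸ hΛ.symm⟩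
  rw [h]
  exact count_eq_one_of_mem (Finset.Icc 1 l).nodup
    (Finset.mem_def.1 (Finset.mem_Icc.2 ⟨h1, h2⟩))

lemma DEnd_eq (Δ : ℕ → LSeg) (l : ℕ) : DEnd Δ l = (Finset.Icc 1 l).val.map Δ := rfl

lemma DBeg_eq (Δ : ℕ → LSeg) (l : ℕ) :
    DBeg Δ l = (Finset.Icc 1 l).val.map (fun i => LSeg.dual (Δ i)) := by
  unfold DBeg DEnd
  rw [Multiset.map_map]
  rfl

lemma mem_DEnd {Δ : ℕ → LSeg} {l : ℕ} {Λ : LSeg} :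
    Λ ∈ DEnd Δ l ↔ ∃ i, 1 ≤ i ∧ i ≤ l ∧ Δ i = Λ := by
  rw [DEnd_eq, mem_map]
  constructor
  · rintro ⟨i, hi, hΛ⟩
    obtain ⟨h1, h2⟩ := Finset.mem_Icc.1 (Finset.mem_def.2 hi)
    exact ⟨i, h1, h2, hΛ⟩
  · rintro ⟨i, h1, h2, hΛ⟩
    exact ⟨i, Finset.mem_def.1 (Finset.mem_Icc.2 ⟨h1, h2⟩), hΛ⟩

lemma mem_DBeg {Δ : ℕ → LSeg} {l : ℕ} {Λ : LSeg} :
    Λ ∈ DBeg Δ l ↔ ∃ i, 1 ≤ i ∧ i ≤ l ∧ LSeg.dual (Δ i) = Λ := by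
  rw [DBeg_eq, mem_map]
  constructor
  · rintro ⟨i, hi, hΛ⟩
    obtain ⟨h1, h2⟩ := Finset.mem_Icc.1 (Finset.mem_def.2 hi)
    exact ⟨i, h1, h2, hΛ⟩
  · rintro ⟨i, h1, h2, hΛ⟩
    exact ⟨i, Finset.mem_def.1 (Finset.mem_Icc.2 ⟨h1, h2⟩), hΛ⟩

lemma count_mHash {m : Multiset Seg} {Δ : ℕ → LSeg} {l : ℕ} {τ : Seg} (hτ : τ.1 ≤ τ.2) :
    (mHash m Δ l).count τ =
      ((smap m - DEnd Δ l - (DBeg Δ l - DBoth Δ l)).map Prod.fst).count τ +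
      (((DBoth Δ l).map (fun Λ => ((Λ.1.1 + 2, Λ.1.2 - 2) : Seg))).count τ +
       ((DEnd Δ l - DBoth Δ l).map (fun Λ => ((Λ.1.1, Λ.1.2 - 2) : Seg))).count τ +
       ((DBeg Δ l - DBoth Δ l).map (fun Λ => ((Λ.1.1 + 2, Λ.1.2) : Seg))).count τ) := by
  unfold mHash
  rw [count_add, count_filter, if_pos hτ, count_add, count_add]

lemma mHash_origin {m : Multiset Seg} {Δ : ℕ → LSeg} {l : ℕ} {τ : Seg}
    (h : τ ∈ mHash m Δ l) :
    (∃ L, ((τ, L) : LSeg) ∈ smap m) ∨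
    (∃ i, 1 ≤ i ∧ i ≤ l ∧ (Δ i).1.1 + 2 = τ.1 ∧ (Δ i).1.2 - 2 = τ.2) ∨
    (∃ i, 1 ≤ i ∧ i ≤ l ∧ (Δ i).1.1 = τ.1 ∧ (Δ i).1.2 - 2 = τ.2) ∨
    (∃ Λ : LSeg, Λ ∈ DBeg Δ l - DBoth Δ l ∧ Λ.1.1 + 2 = τ.1 ∧ Λ.1.2 = τ.2) := by
  unfold mHash at h
  rcases mem_add.1 h with h | h
  · obtain ⟨Λ, hΛ, rfl⟩ := mem_map.1 h
    have hΛ' : Λ ∈ smap m :=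
      mem_of_le (le_trans (Multiset.sub_le_self _ _) (Multiset.sub_le_self _ _)) hΛ
    exact Or.inl ⟨Λ.2, by rwa [Prod.mk.eta]⟩
  · have h' := (mem_filter.1 h).1
    rcases mem_add.1 h' with h2 | h2
    · rcases mem_add.1 h2 with h3 | h3
      · obtain ⟨Λ, hΛ, heq⟩ := mem_map.1 h3
        have hΛ' : Λ ∈ DEnd Δ l := (mem_inter.1 hΛ).1
        obtain ⟨i, h1, h2', hΔ⟩ := mem_DEnd.1 hΛ'
        subst heq
        exact Or.inr (Or.inl ⟨i, h1, h2', by rw [hΔ], by rw [hΔ]⟩)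
      · obtain ⟨Λ, hΛ, heq⟩ := mem_map.1 h3
        have hΛ' : Λ ∈ DEnd Δ l := mem_of_le (Multiset.sub_le_self _ _) hΛ
        obtain ⟨i, h1, h2', hΔ⟩ := mem_DEnd.1 hΛ'
        subst heq
        exact Or.inr (Or.inr (Or.inl ⟨i, h1, h2', by rw [hΔ], by rw [hΔ]⟩))
    · obtain ⟨Λ, hΛ, heq⟩ := mem_map.1 h2
      subst heq
      exact Or.inr (Or.inr (Or.inr ⟨Λ, hΛ, rfl, rfl⟩))

lemma dual_mem {m : Multiset Seg} (hsymm : m.map Seg.dual = m) {σ : Seg} (h : σ ∈ m) :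
    Seg.dual σ ∈ m := by
  conv => rw [← hsymm]
  exact mem_map_of_mem _ h

lemma mHash_parity {m : Multiset Seg} {ε : Seg → ℤ} {Δ : ℕ → LSeg} {l : ℕ}
    (hgood : GoodInput m ε) (hseq : IsInitSeq m ε Δ l)
    {τ : Seg} (h : τ ∈ mHash m Δ l) : τ.1 % 2 = τ.2 % 2 := by
  have hwf : ∀ i, 1 ≤ i → i ≤ l → (Δ i).1.1 % 2 = (Δ i).1.2 % 2 := fun i h1 h2 =>
    (hgood.wf _ ((smap_spec (hseq.mem i h1 h2)).1)).2
  rcases mHash_origin h with ⟨L, hL⟩ | ⟨i, h1, h2, e1, e2⟩ | ⟨i, h1, h2, e1, e2⟩ |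
    ⟨Λ, hΛ, e1, e2⟩
  · exact (hgood.wf _ ((smap_spec hL).1)).2
  · have := hwf i h1 h2; omega
  · have := hwf i h1 h2; omega
  · have hΛ' : Λ ∈ DBeg Δ l := mem_of_le (Multiset.sub_le_self _ _) hΛ
    obtain ⟨i, h1, h2, hd⟩ := mem_DBeg.1 hΛ'
    have hp := hwf i h1 h2
    have e3 : Λ.1.1 = -(Δ i).1.2 := by rw [← hd]; rfl
    have e4 : Λ.1.2 = -(Δ i).1.1 := by rw [← hd]; rfl
    omega

lemma count_DBoth (Δ : ℕ → LSeg) (l : ℕ) (Λ : LSeg) :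
    (DBoth Δ l).count Λ = min ((DEnd Δ l).count Λ) ((DBeg Δ l).count Λ) :=
  count_inter _ _ _

lemma not_mem_sub_of_count_le {s t : Multiset LSeg} {Λ : LSeg}
    (h : s.count Λ ≤ t.count Λ) : Λ ∉ s - t := by
  intro hm
  have := count_pos.2 hm
  rw [count_sub] at this
  omega

lemma seg_components {σ τ : Seg} (h : σ = τ) : σ.1 = τ.1 ∧ σ.2 = τ.2 :=
  ⟨congrArg Prod.fst h, congrArg Prod.snd h⟩

lemma eq_components {Λ : LSeg} {a₁ a₂ : ℤ} {L : Label} (h : Λ = ((a₁, a₂), L)) :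
    Λ.1.1 = a₁ ∧ Λ.1.2 = a₂ ∧ Λ.2 = L :=
  ⟨congrArg (fun X : LSeg => X.1.1) h, congrArg (fun X : LSeg => X.1.2) h,
    congrArg Prod.snd h⟩

lemma dual_eq_components {Λ : LSeg} {a₁ a₂ : ℤ} {L : Label}
    (h : LSeg.dual Λ = ((a₁, a₂), L)) : Λ.1.1 = -a₂ ∧ Λ.1.2 = -a₁ := by
  have h1 : -Λ.1.2 = a₁ := congrArg (fun X : LSeg => X.1.1) h
  have h2 : -Λ.1.1 = a₂ := congrArg (fun X : LSeg => X.1.2) h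
  omega

lemma dual_centered (β : ℤ) (L : Label) :
    LSeg.dual (((-β, β) : Seg), L) = (((-β, β) : Seg), if L = Label.le0 then Label.ge0 else L) := by
  unfold LSeg.dual Seg.dual
  simp

lemma dual_of_ge0 {Λ : LSeg} (h2 : Λ.2 = Label.ge0) (hnc : ¬ Λ.1.1 + Λ.1.2 = 0) :
    LSeg.dual Λ = ((-Λ.1.2, -Λ.1.1), Label.le0) := by
  unfold LSeg.dual Seg.dual
  rw [if_neg hnc, h2]

lemma ne_of_label {σ₁ σ₂ : Seg} {L₁ L₂ : Label} (h : L₁ ≠ L₂) :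
    ((σ₁, L₁) : LSeg) ≠ (σ₂, L₂) := fun he => h (congrArg Prod.snd he)

lemma ne_of_beg {σ₁ σ₂ : Seg} {L₁ L₂ : Label} (h : σ₁.1 ≠ σ₂.1) :
    ((σ₁, L₁) : LSeg) ≠ (σ₂, L₂) := fun he => h (congrArg (fun X : LSeg => X.1.1) he)

lemma ne_of_end {σ₁ σ₂ : Seg} {L₁ L₂ : Label} (h : σ₁.2 ≠ σ₂.2) :
    ((σ₁, L₁) : LSeg) ≠ (σ₂, L₂) := fun he => h (congrArg (fun X : LSeg => X.1.2) he)

lemma seg_eq_iff (σ : Seg) (a₁ a₂ : ℤ) : σ = (a₁, a₂) ↔ σ.1 = a₁ ∧ σ.2 = a₂ :=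
  Prod.ext_iff

end Aux

/-- Lemma 6.0.2: with `Δ'` the initial sequence of `(𝔪#, ε#)`,
assume `e(Δ₁) = e(Δ'₁)`; if `1 ≤ j < l`, `j < l'`, `Δ'_{j+1} ≺ Δ_j`, `c(Δ_j) ≠ 0`
and `c(Δ_{j+1}) = 0`, then `Δ'_{j+1} ⪯ Δ_{j+1}`. -/
theorem stmt1 (m : Multiset Seg) (ε : Seg → ℤ) (hgood : GoodInput m ε) (hne : m ≠ 0)
    (Δ : ℕ → LSeg) (l : ℕ) (hseq : IsInitSeq m ε Δ l)
    (Δ' : ℕ → LSeg) (l' : ℕ) (hne' : mHash m Δ l ≠ 0)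
    (hseq' : IsInitSeq (mHash m Δ l) (epsHash m ε Δ l) Δ' l')
    (hE : (Δ 1).1.2 = (Δ' 1).1.2)
    (j : ℕ) (hj1 : 1 ≤ j) (hjl : j < l) (hjl' : j < l')
    (hlt : LSeg.lt (Δ' (j + 1)) (Δ j))
    (hcj : (Δ j).1.1 + (Δ j).1.2 ≠ 0)
    (hcj1 : (Δ (j + 1)).1.1 + (Δ (j + 1)).1.2 = 0) :
    LSeg.le (Δ' (j + 1)) (Δ (j + 1)) := by
  classical
  have hj1l : j + 1 ≤ l := hjl
  have hmemj : Δ j ∈ smap m := hseq.mem j hj1 (Nat.le_of_lt hjl)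
  have hmemj1 : Δ (j + 1) ∈ smap m := hseq.mem (j + 1) (by omega) hj1l
  have hmem' : Δ' (j + 1) ∈ smap (mHash m Δ l) := hseq'.mem (j + 1) (by omega) hjl'
  obtain ⟨hjm, hjforced, -, -, -⟩ := smap_spec hmemj
  obtain ⟨hj1m, -, -, -, -⟩ := smap_spec hmemj1
  obtain ⟨h'm, h'forced, h'le, h'ge, h'eq⟩ := smap_spec hmem'
  have hsucc := hseq.succ j hj1 hjl
  have hend1 : (Δ (j + 1)).1.2 = (Δ j).1.2 - 2 := hsucc.2.1
  set b : ℤ := (Δ (j + 1)).1.2 with hbdef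
  have hq : (Δ j).1.2 = b + 2 := by omega
  have hx1 : (Δ (j + 1)).1.1 = -b := by omega
  have hσc : (Δ (j + 1)).1 = ((-b, b) : Seg) := Prod.ext_iff.2 ⟨hx1, hbdef.symm⟩
  have hwfj := hgood.wf _ hjm
  have hwfj1 := hgood.wf _ hj1m
  have hbnn : (-b : ℤ) ≤ b := by have := hwfj1.1; omega
  have hEnds := ends_formula hseq
  have hEnds' := ends_formula hseq'
  have hy : (Δ' (j + 1)).1.2 = b := by
    have e1 := hEnds' (j + 1) (by omega) hjl'
    have e2 := hEnds (j + 1) (by omega) hj1l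
    push_cast at e1 e2
    omega
  have hIdx1 : ∀ i, 1 ≤ i → i ≤ l → (Δ i).1.2 = b → i = j + 1 := by
    intro i hi1 hi2 he
    have e1 := hEnds i hi1 hi2
    have e2 := hEnds (j + 1) (by omega) hj1l
    push_cast at e1 e2
    omega
  have hIdxj : ∀ i, 1 ≤ i → i ≤ l → (Δ i).1.2 = b + 2 → i = j := by
    intro i hi1 hi2 he
    have e1 := hEnds i hi1 hi2
    have e2 := hEnds j hj1 (by omega)
    push_cast at e1 e2
    omega
  have hSuccOf : ∀ Λ : LSeg, Λ ∈ smap m → LSeg.lt Λ (Δ j) → Λ.1.2 = b →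
      LSeg.le Λ (Δ (j + 1)) := fun Λ hΛ h1 h2 =>
    hseq.succ_max j hj1 hjl Λ hΛ ⟨h1, by omega, fun hc _ => absurd hc hcj⟩
  have hLjf := hjforced hcj
  by_cases hpos : 0 < (Δ j).1.1 + (Δ j).1.2
  case neg =>
    have hLj : (Δ j).2 = Label.le0 := by
      rw [hLjf]; unfold forcedLabel; rw [if_neg hpos]
    have hlabj : (Δ (j + 1)).2 = Label.le0 := by
      rcases hsucc.1.1 with h | ⟨h, -⟩
      · rw [hLj] at h
        cases h2 : (Δ (j + 1)).2 <;> rw [h2] at h <;> simp [Label.idx] at h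
      · rw [h, hLj]
    have hlab' : (Δ' (j + 1)).2 = Label.le0 := by
      rcases hlt.1 with h | ⟨h, -⟩
      · rw [hLj] at h
        cases h2 : (Δ' (j + 1)).2 <;> rw [h2] at h <;> simp [Label.idx] at h
      · rw [h, hLj]
    have hxs := h'le hlab'
    unfold LSeg.le
    refine Or.inr ⟨by rw [hlab', hlabj], ?_⟩
    rw [hlab', if_neg (by decide)]
    unfold Seg.le
    omega
  case pos =>
    have hLj : (Δ j).2 = Label.ge0 := by
      rw [hLjf]; unfold forcedLabel; rw [if_pos hpos]
    have hpge : -b ≤ (Δ j).1.1 := by have := hwfj.2; omega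
    have hcent : (-b : ℤ) + b = 0 := by omega
    obtain ⟨hsle, hsge, hseq0⟩ := smap_count_centered m (σ := ((-b, b) : Seg)) hcent
    have hmem_ge0 : 1 ≤ m.count ((-b, b) : Seg) / 2 →
        ((((-b, b) : Seg)), Label.ge0) ∈ smap m := by
      intro h
      exact Multiset.count_pos.1 (by rw [hsge]; omega)
    have hmem_eq0 : m.count ((-b, b) : Seg) % 2 = 1 →
        ((((-b, b) : Seg)), Label.eq0) ∈ smap m := by
      intro h
      exact Multiset.count_pos.1 (by rw [hseq0]; omega)
    have hlt_eq0 : LSeg.lt ((((-b, b) : Seg)), Label.eq0) (Δ j) := by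
      unfold LSeg.lt LSeg.le
      refine ⟨Or.inl ?_, ?_⟩
      · rw [hLj]
        exact (by decide : Label.eq0.idx < Label.ge0.idx)
      · intro he
        have h2 := (eq_components he.symm).2.2
        rw [hLj] at h2
        exact Label.noConfusion h2
    have hlt_ge0X : ∀ u : ℤ, u < (Δ j).1.1 →
        LSeg.lt ((((u, b) : Seg)), Label.ge0) (Δ j) := by
      intro u hu
      unfold LSeg.lt LSeg.le
      refine ⟨Or.inr ⟨by rw [hLj], ?_⟩, ?_⟩
      · rw [if_neg (show ¬(((u, b) : Seg), Label.ge0).2 = Label.eq0 from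
          fun h => Label.noConfusion h)]
        unfold Seg.le
        exact Or.inl hu
      · intro he
        have h2 := (eq_components he.symm).2.1
        omega
    have hDBoth' := count_DBoth Δ l
    have hDEnd_b : ∀ (u : ℤ) (L : Label), (DEnd Δ l).count (((u, b) : Seg), L) =
        if Δ (j + 1) = (((u, b) : Seg), L) then 1 else 0 := by
      intro u L
      split
      case isTrue h =>
        rw [DEnd_eq]
        exact count_mapIcc_eq_one (by omega) hj1l h
          (fun i hi1 hi2 he => hIdx1 i hi1 hi2 (eq_components he).2.1)
      case isFalse h =>
        rw [DEnd_eq]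
        refine count_mapIcc_eq_zero (fun i hi1 hi2 he => ?_)
        have hii := hIdx1 i hi1 hi2 (eq_components he).2.1
        rw [hii] at he
        exact h he
    have hDEnd_b2 : ∀ (u : ℤ) (L : Label), (DEnd Δ l).count (((u, b + 2) : Seg), L) =
        if Δ j = (((u, b + 2) : Seg), L) then 1 else 0 := by
      intro u L
      split
      case isTrue h =>
        rw [DEnd_eq]
        exact count_mapIcc_eq_one hj1 (by omega) h
          (fun i hi1 hi2 he => hIdxj i hi1 hi2 (eq_components he).2.1)
      case isFalse h =>
        rw [DEnd_eq]
        refine count_mapIcc_eq_zero (fun i hi1 hi2 he => ?_)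
        have hii := hIdxj i hi1 hi2 (eq_components he).2.1
        rw [hii] at he
        exact h he
    have hDBeg_b : ∀ (v : ℤ) (L : Label), (DBeg Δ l).count (((-b, v) : Seg), L) =
        if LSeg.dual (Δ (j + 1)) = (((-b, v) : Seg), L) then 1 else 0 := by
      intro v L
      split
      case isTrue h =>
        rw [DBeg_eq]
        exact count_mapIcc_eq_one (by omega) hj1l h
          (fun i hi1 hi2 he => hIdx1 i hi1 hi2
            (show (Δ i).1.2 = b by have := (dual_eq_components he).2; omega))
      case isFalse h =>
        rw [DBeg_eq]
        refine count_mapIcc_eq_zero (fun i hi1 hi2 he => ?_)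
        have hii := hIdx1 i hi1 hi2
          (show (Δ i).1.2 = b by have := (dual_eq_components he).2; omega)
        rw [hii] at he
        exact h he
    have hDBeg_b2 : ∀ (v : ℤ) (L : Label), (DBeg Δ l).count (((-b - 2, v) : Seg), L) =
        if LSeg.dual (Δ j) = (((-b - 2, v) : Seg), L) then 1 else 0 := by
      intro v L
      split
      case isTrue h =>
        rw [DBeg_eq]
        exact count_mapIcc_eq_one hj1 (by omega) h
          (fun i hi1 hi2 he => hIdxj i hi1 hi2
            (show (Δ i).1.2 = b + 2 by have := (dual_eq_components he).2; omega))
      case isFalse h =>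
        rw [DBeg_eq]
        refine count_mapIcc_eq_zero (fun i hi1 hi2 he => ?_)
        have hii := hIdxj i hi1 hi2
          (show (Δ i).1.2 = b + 2 by have := (dual_eq_components he).2; omega)
        rw [hii] at he
        exact h he
    have hf_g : ∀ Λ : LSeg, ((Λ.1.1 + 2, Λ.1.2 - 2) : Seg) = ((-b, b) : Seg) ↔
        Λ.1 = ((-b - 2, b + 2) : Seg) := by
      intro Λ
      constructor
      · intro h
        have h1 : Λ.1.1 + 2 = -b := (seg_components h).1
        have h2 : Λ.1.2 - 2 = b := (seg_components h).2
        exact Prod.ext_iff.2 ⟨show Λ.1.1 = -b - 2 by omega, show Λ.1.2 = b + 2 by omega⟩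
      · intro h
        have h1 : Λ.1.1 = -b - 2 := (seg_components h).1
        have h2 : Λ.1.2 = b + 2 := (seg_components h).2
        exact Prod.ext_iff.2 ⟨show Λ.1.1 + 2 = -b by omega, show Λ.1.2 - 2 = b by omega⟩
    have hf_g' : ∀ Λ : LSeg, ((Λ.1.1, Λ.1.2 - 2) : Seg) = ((-b, b) : Seg) ↔
        Λ.1 = ((-b, b + 2) : Seg) := by
      intro Λ
      constructor
      · intro h
        have h1 : Λ.1.1 = -b := (seg_components h).1
        have h2 : Λ.1.2 - 2 = b := (seg_components h).2
        exact Prod.ext_iff.2 ⟨show Λ.1.1 = -b by omega, show Λ.1.2 = b + 2 by omega⟩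
      · intro h
        have h1 : Λ.1.1 = -b := (seg_components h).1
        have h2 : Λ.1.2 = b + 2 := (seg_components h).2
        exact Prod.ext_iff.2 ⟨show Λ.1.1 = -b by omega, show Λ.1.2 - 2 = b by omega⟩
    have hf_g'' : ∀ Λ : LSeg, ((Λ.1.1 + 2, Λ.1.2) : Seg) = ((-b, b) : Seg) ↔
        Λ.1 = ((-b - 2, b) : Seg) := by
      intro Λ
      constructor
      · intro h
        have h1 : Λ.1.1 + 2 = -b := (seg_components h).1
        have h2 : Λ.1.2 = b := (seg_components h).2
        exact Prod.ext_iff.2 ⟨show Λ.1.1 = -b - 2 by omega, show Λ.1.2 = b by omega⟩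
      · intro h
        have h1 : Λ.1.1 = -b - 2 := (seg_components h).1
        have h2 : Λ.1.2 = b := (seg_components h).2
        exact Prod.ext_iff.2 ⟨show Λ.1.1 + 2 = -b by omega, show Λ.1.2 = b by omega⟩
    cases hlabj : (Δ (j + 1)).2 with
    | le0 =>
      have hj1seg : Δ (j + 1) = (((-b, b) : Seg), Label.le0) :=
        Prod.ext_iff.2 ⟨hσc, hlabj⟩
      have hdj1 : LSeg.dual (Δ (j + 1)) = (((-b, b) : Seg), Label.ge0) := by
        rw [hj1seg, dual_centered]
        simp
      have hc2 : 1 ≤ m.count ((-b, b) : Seg) / 2 := by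
        have h1 := Multiset.count_pos.2 (show (((-b, b) : Seg), Label.le0) ∈ smap m by
          rw [← hj1seg]; exact hmemj1)
        rw [hsle] at h1
        omega
      have hceven : m.count ((-b, b) : Seg) % 2 = 0 := by
        by_contra hodd
        have hcon := hSuccOf _ (hmem_eq0 (by omega)) hlt_eq0 rfl
        rw [hj1seg] at hcon
        unfold LSeg.le at hcon
        rcases hcon with h | ⟨h, -⟩
        · simp [Label.idx] at h
        · exact Label.noConfusion h
      have hPb : (Δ j).1.1 = -b := by
        by_contra hP
        have hcon := hSuccOf _ (hmem_ge0 hc2) (hlt_ge0X (-b) (by omega)) rfl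
        rw [hj1seg] at hcon
        unfold LSeg.le at hcon
        rcases hcon with h | ⟨h, -⟩
        · simp [Label.idx] at h
        · exact Label.noConfusion h
      cases hlab' : (Δ' (j + 1)).2 with
      | le0 =>
        have hxs := h'le hlab'
        unfold LSeg.le
        refine Or.inr ⟨by rw [hlab', hlabj], ?_⟩
        rw [hlab', if_neg (by decide)]
        unfold Seg.le
        omega
      | eq0 =>
        exfalso
        have hxx : (Δ' (j + 1)).1.1 = -b := by have := h'eq hlab'; omega
        have h'seg : Δ' (j + 1) = (((-b, b) : Seg), Label.eq0) :=
          Prod.ext_iff.2 ⟨Prod.ext_iff.2 ⟨hxx, hy⟩, hlab'⟩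
        have hjseg : Δ j = (((-b, b + 2) : Seg), Label.ge0) :=
          Prod.ext_iff.2 ⟨Prod.ext_iff.2 ⟨hPb, hq⟩, hLj⟩
        have hdj0 := dual_of_ge0 hLj hcj
        have hdj : LSeg.dual (Δ j) = (((-b - 2, b) : Seg), Label.le0) := by
          rw [hdj0]
          exact Prod.ext_iff.2 ⟨Prod.ext_iff.2 ⟨show -(Δ j).1.2 = -b - 2 by omega,
            show -(Δ j).1.1 = b by omega⟩, rfl⟩
        have hEl : (DEnd Δ l).count (((-b, b) : Seg), Label.le0) = 1 := by
          rw [hDEnd_b, if_pos hj1seg]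
        have hEg : (DEnd Δ l).count (((-b, b) : Seg), Label.ge0) = 0 := by
          rw [hDEnd_b, if_neg (by rw [hj1seg]; exact ne_of_label (by decide))]
        have hEe : (DEnd Δ l).count (((-b, b) : Seg), Label.eq0) = 0 := by
          rw [hDEnd_b, if_neg (by rw [hj1seg]; exact ne_of_label (by decide))]
        have hBl : (DBeg Δ l).count (((-b, b) : Seg), Label.le0) = 0 := by
          rw [hDBeg_b, if_neg (by rw [hdj1]; exact ne_of_label (by decide))]
        have hBg : (DBeg Δ l).count (((-b, b) : Seg), Label.ge0) = 1 := by
          rw [hDBeg_b, if_pos hdj1]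
        have hBe : (DBeg Δ l).count (((-b, b) : Seg), Label.eq0) = 0 := by
          rw [hDBeg_b, if_neg (by rw [hdj1]; exact ne_of_label (by decide))]
        have hpart1 : ((smap m - DEnd Δ l - (DBeg Δ l - DBoth Δ l)).map Prod.fst).count
            ((-b, b) : Seg) = m.count ((-b, b) : Seg) - 2 := by
          rw [count_map_fst]
          simp only [Multiset.count_sub, hDBoth']
          rw [hsle, hsge, hseq0, hEl, hEg, hEe, hBl, hBg, hBe]
          omega
        have hgz : (((DBoth Δ l)).map (fun Λ => ((Λ.1.1 + 2, Λ.1.2 - 2) : Seg))).count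
            ((-b, b) : Seg) = 0 := by
          rw [count_map_seg _ _ ((-b - 2, b + 2) : Seg) _ hf_g]
          simp only [hDBoth']
          have hze : ∀ L, (DEnd Δ l).count (((-b - 2, b + 2) : Seg), L) = 0 := fun L => by
            rw [hDEnd_b2, if_neg (by rw [hjseg]; exact ne_of_beg (show (-b : ℤ) ≠ -b - 2 by omega))]
          simp only [hze]
          simp
        have hg'o : ((DEnd Δ l - DBoth Δ l).map (fun Λ => ((Λ.1.1, Λ.1.2 - 2) : Seg))).count
            ((-b, b) : Seg) = 1 := by
          rw [count_map_seg _ _ ((-b, b + 2) : Seg) _ hf_g']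
          simp only [Multiset.count_sub, hDBoth']
          have hBz : ∀ L, (DBeg Δ l).count (((-b, b + 2) : Seg), L) = 0 := fun L => by
            rw [hDBeg_b, if_neg (by rw [hdj1]; exact ne_of_end (show (b : ℤ) ≠ b + 2 by omega))]
          have hEl2 : (DEnd Δ l).count (((-b, b + 2) : Seg), Label.le0) = 0 := by
            rw [hDEnd_b2, if_neg (by rw [hjseg]; exact ne_of_label (by decide))]
          have hEe2 : (DEnd Δ l).count (((-b, b + 2) : Seg), Label.eq0) = 0 := by
            rw [hDEnd_b2, if_neg (by rw [hjseg]; exact ne_of_label (by decide))]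
          have hEg2 : (DEnd Δ l).count (((-b, b + 2) : Seg), Label.ge0) = 1 := by
            rw [hDEnd_b2, if_pos hjseg]
          simp only [hBz]
          rw [hEl2, hEe2, hEg2]
          omega
        have hg''o : ((DBeg Δ l - DBoth Δ l).map (fun Λ => ((Λ.1.1 + 2, Λ.1.2) : Seg))).count
            ((-b, b) : Seg) = 1 := by
          rw [count_map_seg _ _ ((-b - 2, b) : Seg) _ hf_g'']
          simp only [Multiset.count_sub, hDBoth']
          have hEz : ∀ L, (DEnd Δ l).count (((-b - 2, b) : Seg), L) = 0 := fun L => by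
            rw [hDEnd_b, if_neg (by rw [hj1seg]; exact ne_of_beg (show (-b : ℤ) ≠ -b - 2 by omega))]
          have hBl2 : (DBeg Δ l).count (((-b - 2, b) : Seg), Label.le0) = 1 := by
            rw [hDBeg_b2, if_pos hdj]
          have hBe2 : (DBeg Δ l).count (((-b - 2, b) : Seg), Label.eq0) = 0 := by
            rw [hDBeg_b2, if_neg (by rw [hdj]; exact ne_of_label (by decide))]
          have hBg2 : (DBeg Δ l).count (((-b - 2, b) : Seg), Label.ge0) = 0 := by
            rw [hDBeg_b2, if_neg (by rw [hdj]; exact ne_of_label (by decide))]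
          simp only [hEz]
          rw [hBl2, hBe2, hBg2]
          omega
        have hct : (mHash m Δ l).count ((-b, b) : Seg) = m.count ((-b, b) : Seg) := by
          rw [count_mHash hbnn, hpart1, hgz, hg'o, hg''o]
          omega
        obtain ⟨-, -, hcm'⟩ := smap_count_centered (mHash m Δ l) (σ := ((-b, b) : Seg)) hcent
        have hm'' := Multiset.count_pos.2 (show (((-b, b) : Seg), Label.eq0) ∈
          smap (mHash m Δ l) by rw [← h'seg]; exact hmem')
        rw [hcm', hct] at hm''
        omega
      | ge0 =>
        exfalso
        have hxge : 0 ≤ (Δ' (j + 1)).1.1 + (Δ' (j + 1)).1.2 := h'ge hlab'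
        obtain ⟨hle0, -⟩ := hlt
        rcases hle0 with h | ⟨-, hifs⟩
        · rw [hlab', hLj] at h
          exact absurd h (by decide)
        · rw [hlab'] at hifs
          rw [if_neg (by decide)] at hifs
          unfold Seg.le at hifs
          rcases hifs with h | ⟨h1, h2⟩ <;> omega
    | eq0 =>
      have hj1seg : Δ (j + 1) = (((-b, b) : Seg), Label.eq0) :=
        Prod.ext_iff.2 ⟨hσc, hlabj⟩
      have hdj1 : LSeg.dual (Δ (j + 1)) = (((-b, b) : Seg), Label.eq0) := by
        rw [hj1seg, dual_centered]
        simp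
      cases hlab' : (Δ' (j + 1)).2 with
      | le0 =>
        unfold LSeg.le
        refine Or.inl ?_
        rw [hlab', hlabj]
        decide
      | eq0 =>
        unfold LSeg.le
        refine Or.inr ⟨by rw [hlab', hlabj], ?_⟩
        rw [hlab', if_pos rfl]
        omega
      | ge0 =>
        exfalso
        have hcodd : m.count ((-b, b) : Seg) % 2 = 1 := by
          have h1 := Multiset.count_pos.2 (show (((-b, b) : Seg), Label.eq0) ∈ smap m by
            rw [← hj1seg]; exact hmemj1)
          rw [hseq0] at h1
          omega
        have hxge : 0 ≤ (Δ' (j + 1)).1.1 + (Δ' (j + 1)).1.2 := h'ge hlab'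
        by_cases hPb : (Δ j).1.1 = -b
        · obtain ⟨hle0, -⟩ := hlt
          rcases hle0 with h | ⟨-, hifs⟩
          · rw [hlab', hLj] at h
            exact absurd h (by decide)
          · rw [hlab'] at hifs
            rw [if_neg (by decide)] at hifs
            unfold Seg.le at hifs
            rcases hifs with h | ⟨h1, h2⟩ <;> omega
        · have hp' : -b < (Δ j).1.1 := by omega
          have hc1 : m.count ((-b, b) : Seg) = 1 := by
            by_contra hcc
            have hcon := hSuccOf _ (hmem_ge0 (by omega)) (hlt_ge0X (-b) hp') rfl
            rw [hj1seg] at hcon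
            unfold LSeg.le at hcon
            rcases hcon with h | ⟨h, -⟩
            · simp [Label.idx] at h
            · exact Label.noConfusion h
          have hxp : (Δ' (j + 1)).1.1 < (Δ j).1.1 := by
            obtain ⟨hle0, -⟩ := hlt
            rcases hle0 with h | ⟨-, hifs⟩
            · rw [hlab', hLj] at h
              exact absurd h (by decide)
            · rw [hlab'] at hifs
              rw [if_neg (by decide)] at hifs
              unfold Seg.le at hifs
              rcases hifs with h | ⟨h1, h2⟩ <;> omega
          by_cases hxb : (Δ' (j + 1)).1.1 = -b
          · have h'pair : (Δ' (j + 1)).1 = ((-b, b) : Seg) := Prod.ext_iff.2 ⟨hxb, hy⟩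
            have hmm : ((-b, b) : Seg) ∈ mHash m Δ l := by rw [← h'pair]; exact h'm
            have hcz := Multiset.count_pos.2 hmm
            have hEl0 : (DEnd Δ l).count (((-b, b) : Seg), Label.le0) = 0 := by
              rw [hDEnd_b, if_neg (by rw [hj1seg]; exact ne_of_label (by decide))]
            have hEg0 : (DEnd Δ l).count (((-b, b) : Seg), Label.ge0) = 0 := by
              rw [hDEnd_b, if_neg (by rw [hj1seg]; exact ne_of_label (by decide))]
            have hEe1 : (DEnd Δ l).count (((-b, b) : Seg), Label.eq0) = 1 := by
              rw [hDEnd_b, if_pos hj1seg]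
            have hBl0 : (DBeg Δ l).count (((-b, b) : Seg), Label.le0) = 0 := by
              rw [hDBeg_b, if_neg (by rw [hdj1]; exact ne_of_label (by decide))]
            have hBg0 : (DBeg Δ l).count (((-b, b) : Seg), Label.ge0) = 0 := by
              rw [hDBeg_b, if_neg (by rw [hdj1]; exact ne_of_label (by decide))]
            have hBe1 : (DBeg Δ l).count (((-b, b) : Seg), Label.eq0) = 1 := by
              rw [hDBeg_b, if_pos hdj1]
            have hpart1 : ((smap m - DEnd Δ l - (DBeg Δ l - DBoth Δ l)).map Prod.fst).count
                ((-b, b) : Seg) = 0 := by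
              rw [count_map_fst]
              simp only [Multiset.count_sub, hDBoth']
              rw [hsle, hsge, hseq0, hEl0, hEg0, hEe1, hBl0, hBg0, hBe1, hc1]
              omega
            have hgz : (((DBoth Δ l)).map (fun Λ => ((Λ.1.1 + 2, Λ.1.2 - 2) : Seg))).count
                ((-b, b) : Seg) = 0 := by
              rw [count_map_seg _ _ ((-b - 2, b + 2) : Seg) _ hf_g]
              simp only [hDBoth']
              have hze : ∀ L, (DEnd Δ l).count (((-b - 2, b + 2) : Seg), L) = 0 := fun L => by
                rw [hDEnd_b2, if_neg (fun hh => absurd (eq_components hh).1 (by omega))]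
              simp only [hze]
              simp
            have hg'z : ((DEnd Δ l - DBoth Δ l).map (fun Λ => ((Λ.1.1, Λ.1.2 - 2) : Seg))).count
                ((-b, b) : Seg) = 0 := by
              rw [count_map_seg _ _ ((-b, b + 2) : Seg) _ hf_g']
              simp only [Multiset.count_sub, hDBoth']
              have hze : ∀ L, (DEnd Δ l).count (((-b, b + 2) : Seg), L) = 0 := fun L => by
                rw [hDEnd_b2, if_neg (fun hh => absurd (eq_components hh).1 (by omega))]
              simp only [hze]
              omega
            have hg''z : ((DBeg Δ l - DBoth Δ l).map (fun Λ => ((Λ.1.1 + 2, Λ.1.2) : Seg))).count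
                ((-b, b) : Seg) = 0 := by
              rw [count_map_seg _ _ ((-b - 2, b) : Seg) _ hf_g'']
              simp only [Multiset.count_sub, hDBoth']
              have hzb : ∀ L, (DBeg Δ l).count (((-b - 2, b) : Seg), L) = 0 := fun L => by
                rw [hDBeg_b2, if_neg (fun hh => absurd (dual_eq_components hh).1 (by omega))]
              simp only [hzb]
              omega
            have hct0 : (mHash m Δ l).count ((-b, b) : Seg) = 0 := by
              rw [count_mHash hbnn, hpart1, hgz, hg'z, hg''z]
            omega
          · have hxgt : -b < (Δ' (j + 1)).1.1 := by omega
            have h'pair : (Δ' (j + 1)).1 = (((Δ' (j + 1)).1.1, b) : Seg) :=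
              Prod.ext_iff.2 ⟨rfl, hy⟩
            have hmm : (((Δ' (j + 1)).1.1, b) : Seg) ∈ mHash m Δ l := by
              rw [← h'pair]; exact h'm
            rcases mHash_origin hmm with ⟨L, hL⟩ | ⟨i, hi1, hi2, e1, e2⟩ |
              ⟨i, hi1, hi2, e1, e2⟩ | ⟨Λ, hΛ, e1, e2⟩
            · have hxm' : (((Δ' (j + 1)).1.1, b) : Seg) ∈ m := (smap_spec hL).1
              have hmemX := mem_smap_noncentered (σ := (((Δ' (j + 1)).1.1, b) : Seg)) hxm'
                (show ¬((Δ' (j + 1)).1.1 + b = 0) by omega)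
              have hfX : forcedLabel (((Δ' (j + 1)).1.1, b) : Seg) = Label.ge0 := by
                unfold forcedLabel
                rw [if_pos (show (0 : ℤ) < (Δ' (j + 1)).1.1 + b by omega)]
              rw [hfX] at hmemX
              have hcon := hSuccOf _ hmemX (hlt_ge0X _ hxp) rfl
              rw [hj1seg] at hcon
              unfold LSeg.le at hcon
              rcases hcon with h | ⟨h, -⟩
              · simp [Label.idx] at h
              · exact Label.noConfusion h
            · have e1' : (Δ i).1.1 + 2 = (Δ' (j + 1)).1.1 := e1
              have e2' : (Δ i).1.2 - 2 = b := e2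
              have hii := hIdxj i hi1 hi2 (by omega)
              rw [hii] at e1'
              omega
            · have e1' : (Δ i).1.1 = (Δ' (j + 1)).1.1 := e1
              have e2' : (Δ i).1.2 - 2 = b := e2
              have hii := hIdxj i hi1 hi2 (by omega)
              rw [hii] at e1'
              omega
            · have hΛB : Λ ∈ DBeg Δ l := Multiset.mem_of_le (Multiset.sub_le_self _ _) hΛ
              obtain ⟨i, hi1, hi2, hdi⟩ := mem_DBeg.1 hΛB
              have e1' : Λ.1.1 + 2 = (Δ' (j + 1)).1.1 := e1
              have e2' : Λ.1.2 = b := e2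
              have hdc := dual_eq_components
                (show LSeg.dual (Δ i) = ((Λ.1.1, Λ.1.2), Λ.2) from hdi)
              have hmi : (Δ i).1 ∈ m := (smap_spec (hseq.mem i hi1 hi2)).1
              have hdm : Seg.dual (Δ i).1 ∈ m := dual_mem hgood.symm hmi
              have hdseg : Seg.dual (Δ i).1 = (((Δ' (j + 1)).1.1 - 2, b) : Seg) :=
                Prod.ext_iff.2 ⟨show -(Δ i).1.2 = (Δ' (j + 1)).1.1 - 2 by omega,
                  show -(Δ i).1.1 = b by omega⟩
              rcases lt_trichotomy ((Δ' (j + 1)).1.1 - 2 + b) 0 with hs | hs | hs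
              · have hpar : (Δ' (j + 1)).1.1 % 2 = b % 2 := mHash_parity hgood hseq hmm
                omega
              · have hii : i = j + 1 := hIdx1 i hi1 hi2 (by omega)
                rw [hii] at hdi
                have hΛval : Λ = (((-b, b) : Seg), Label.eq0) := by rw [← hdi, hdj1]
                have hBcnt : (DBeg Δ l).count (((-b, b) : Seg), Label.eq0) = 1 := by
                  rw [hDBeg_b, if_pos hdj1]
                have hEcnt : (DEnd Δ l).count (((-b, b) : Seg), Label.eq0) = 1 := by
                  rw [hDEnd_b, if_pos hj1seg]
                have hnm := not_mem_sub_of_count_le (s := DBeg Δ l) (t := DBoth Δ l)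
                  (Λ := (((-b, b) : Seg), Label.eq0))
                  (by rw [hBcnt, hDBoth', hEcnt, hBcnt]; omega)
                rw [hΛval] at hΛ
                exact hnm hΛ
              · have hmemX := mem_smap_noncentered
                  (σ := (((Δ' (j + 1)).1.1 - 2, b) : Seg)) (by rw [← hdseg]; exact hdm)
                  (show ¬((Δ' (j + 1)).1.1 - 2 + b = 0) by omega)
                have hfX : forcedLabel (((Δ' (j + 1)).1.1 - 2, b) : Seg) = Label.ge0 := by
                  unfold forcedLabel
                  rw [if_pos (show (0 : ℤ) < (Δ' (j + 1)).1.1 - 2 + b by omega)]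
                rw [hfX] at hmemX
                have hcon := hSuccOf _ hmemX (hlt_ge0X _ (by omega)) rfl
                rw [hj1seg] at hcon
                unfold LSeg.le at hcon
                rcases hcon with h | ⟨h, -⟩
                · simp [Label.idx] at h
                · exact Label.noConfusion h
    | ge0 =>
      have hj1seg : Δ (j + 1) = (((-b, b) : Seg), Label.ge0) :=
        Prod.ext_iff.2 ⟨hσc, hlabj⟩
      have hdj1 : LSeg.dual (Δ (j + 1)) = (((-b, b) : Seg), Label.ge0) := by
        rw [hj1seg, dual_centered]
        simp
      cases hlab' : (Δ' (j + 1)).2 with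
      | le0 =>
        unfold LSeg.le
        refine Or.inl ?_
        rw [hlab', hlabj]
        decide
      | eq0 =>
        unfold LSeg.le
        refine Or.inl ?_
        rw [hlab', hlabj]
        decide
      | ge0 =>
        have hxge : 0 ≤ (Δ' (j + 1)).1.1 + (Δ' (j + 1)).1.2 := h'ge hlab'
        have hp' : -b < (Δ j).1.1 := by
          obtain ⟨hle0, -⟩ := hsucc.1
          rcases hle0 with h | ⟨-, hifs⟩
          · rw [hlabj, hLj] at h
            exact absurd h (by decide)
          · rw [hlabj] at hifs
            rw [if_neg (by decide)] at hifs
            unfold Seg.le at hifs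
            rcases hifs with h | ⟨h1, h2⟩ <;> omega
        by_cases hxb : (Δ' (j + 1)).1.1 = -b
        · unfold LSeg.le
          refine Or.inr ⟨by rw [hlab', hlabj], ?_⟩
          rw [hlab', if_neg (by decide)]
          unfold Seg.le
          omega
        · exfalso
          have hxgt : -b < (Δ' (j + 1)).1.1 := by omega
          have hxp : (Δ' (j + 1)).1.1 < (Δ j).1.1 := by
            obtain ⟨hle0, -⟩ := hlt
            rcases hle0 with h | ⟨-, hifs⟩
            · rw [hlab', hLj] at h
              exact absurd h (by decide)
            · rw [hlab'] at hifs
              rw [if_neg (by decide)] at hifs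
              unfold Seg.le at hifs
              rcases hifs with h | ⟨h1, h2⟩ <;> omega
          have h'pair : (Δ' (j + 1)).1 = (((Δ' (j + 1)).1.1, b) : Seg) :=
            Prod.ext_iff.2 ⟨rfl, hy⟩
          have hmm : (((Δ' (j + 1)).1.1, b) : Seg) ∈ mHash m Δ l := by
            rw [← h'pair]; exact h'm
          rcases mHash_origin hmm with ⟨L, hL⟩ | ⟨i, hi1, hi2, e1, e2⟩ |
            ⟨i, hi1, hi2, e1, e2⟩ | ⟨Λ, hΛ, e1, e2⟩
          · have hxm' : (((Δ' (j + 1)).1.1, b) : Seg) ∈ m := (smap_spec hL).1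
            have hmemX := mem_smap_noncentered (σ := (((Δ' (j + 1)).1.1, b) : Seg)) hxm'
              (show ¬((Δ' (j + 1)).1.1 + b = 0) by omega)
            have hfX : forcedLabel (((Δ' (j + 1)).1.1, b) : Seg) = Label.ge0 := by
              unfold forcedLabel
              rw [if_pos (show (0 : ℤ) < (Δ' (j + 1)).1.1 + b by omega)]
            rw [hfX] at hmemX
            have hcon := hSuccOf _ hmemX (hlt_ge0X _ hxp) rfl
            rw [hj1seg] at hcon
            unfold LSeg.le at hcon
            rcases hcon with h | ⟨-, hifs⟩
            · simp [Label.idx] at h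
            · have hifs' : (Δ' (j + 1)).1.1 < -b ∨
                  ((Δ' (j + 1)).1.1 = -b ∧ (b : ℤ) ≤ b) := hifs
              rcases hifs' with h | ⟨h1, -⟩ <;> omega
          · have e1' : (Δ i).1.1 + 2 = (Δ' (j + 1)).1.1 := e1
            have e2' : (Δ i).1.2 - 2 = b := e2
            have hii := hIdxj i hi1 hi2 (by omega)
            rw [hii] at e1'
            omega
          · have e1' : (Δ i).1.1 = (Δ' (j + 1)).1.1 := e1
            have e2' : (Δ i).1.2 - 2 = b := e2
            have hii := hIdxj i hi1 hi2 (by omega)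
            rw [hii] at e1'
            omega
          · have hΛB : Λ ∈ DBeg Δ l := Multiset.mem_of_le (Multiset.sub_le_self _ _) hΛ
            obtain ⟨i, hi1, hi2, hdi⟩ := mem_DBeg.1 hΛB
            have e1' : Λ.1.1 + 2 = (Δ' (j + 1)).1.1 := e1
            have e2' : Λ.1.2 = b := e2
            have hdc := dual_eq_components
              (show LSeg.dual (Δ i) = ((Λ.1.1, Λ.1.2), Λ.2) from hdi)
            have hmi : (Δ i).1 ∈ m := (smap_spec (hseq.mem i hi1 hi2)).1
            have hdm : Seg.dual (Δ i).1 ∈ m := dual_mem hgood.symm hmi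
            have hdseg : Seg.dual (Δ i).1 = (((Δ' (j + 1)).1.1 - 2, b) : Seg) :=
              Prod.ext_iff.2 ⟨show -(Δ i).1.2 = (Δ' (j + 1)).1.1 - 2 by omega,
                show -(Δ i).1.1 = b by omega⟩
            rcases lt_trichotomy ((Δ' (j + 1)).1.1 - 2 + b) 0 with hs | hs | hs
            · have hpar : (Δ' (j + 1)).1.1 % 2 = b % 2 := mHash_parity hgood hseq hmm
              omega
            · have hii : i = j + 1 := hIdx1 i hi1 hi2 (by omega)
              rw [hii] at hdi
              have hΛval : Λ = (((-b, b) : Seg), Label.ge0) := by rw [← hdi, hdj1]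
              have hBcnt : (DBeg Δ l).count (((-b, b) : Seg), Label.ge0) = 1 := by
                rw [hDBeg_b, if_pos hdj1]
              have hEcnt : (DEnd Δ l).count (((-b, b) : Seg), Label.ge0) = 1 := by
                rw [hDEnd_b, if_pos hj1seg]
              have hnm := not_mem_sub_of_count_le (s := DBeg Δ l) (t := DBoth Δ l)
                (Λ := (((-b, b) : Seg), Label.ge0))
                (by rw [hBcnt, hDBoth', hEcnt, hBcnt]; omega)
              rw [hΛval] at hΛ
              exact hnm hΛ
            · have hmemX := mem_smap_noncentered
                (σ := (((Δ' (j + 1)).1.1 - 2, b) : Seg)) (by rw [← hdseg]; exact hdm)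
                (show ¬((Δ' (j + 1)).1.1 - 2 + b = 0) by omega)
              have hfX : forcedLabel (((Δ' (j + 1)).1.1 - 2, b) : Seg) = Label.ge0 := by
                unfold forcedLabel
                rw [if_pos (show (0 : ℤ) < (Δ' (j + 1)).1.1 - 2 + b by omega)]
              rw [hfX] at hmemX
              have hcon := hSuccOf _ hmemX (hlt_ge0X _ (by omega)) rfl
              rw [hj1seg] at hcon
              unfold LSeg.le at hcon
              rcases hcon with h | ⟨-, hifs⟩
              · simp [Label.idx] at h
              · have hifs' : (Δ' (j + 1)).1.1 - 2 < -b ∨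
                    ((Δ' (j + 1)).1.1 - 2 = -b ∧ (b : ℤ) ≤ b) := hifs
                rcases hifs' with h | ⟨h1, -⟩ <;> omega

end AZ
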